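/- In the reduced FA instance, if π* is an optimal partition, then no coalition of π* contains two distinct set-cliques, i.e., there are no C ∈ π* and j ≠ j' with K^j_X ∪ K^{j'}_X ⊆ C. -/

import Mathlib

open Finset

/-- FA utility of agent `i` with friend set `t` for a coalition `C` containing her:
`u_i(C) = |C ∩ F_i| − |C ∩ E_i| / n`, where `E_i = N \ (F_i ∪ {i})`. -/
def faUtil (n : ℕ) (t : Finset (Fin n)) (i : Fin n) (C : Finset (Fin n)) : ℚ :=
  ((C ∩ t).card : ℚ) - ((C \ (t ∪ {i})).card : ℚ) / (n : ℚ)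

/-- Social welfare of a partition of the agents (`SW(π) = Σ_i u_i(π(i))`). -/
def faSW (n : ℕ) (F : Fin n → Finset (Fin n))
    (π : Finpartition (univ : Finset (Fin n))) : ℚ :=
  ∑ C ∈ π.parts, ∑ i ∈ C, faUtil n (F i) i C

/-- The reduced FA instance built from a `3`-Partition instance `x : Fin (3m) → ℕ`:
the `n` agents are the disjoint union of element-cliques `elemClique h` of size `x h`
and set-cliques `setClique k` of size `X = 4m²T`; each clique is bidirectional, and
between each element-clique and each set-clique there is a perfect matching of the
element-clique into the set-clique; no other friendship relations exist. -/
structure ReducedFA (m T n : ℕ) (x : Fin (3 * m) → ℕ) where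
  F : Fin n → Finset (Fin n)
  elemClique : Fin (3 * m) → Finset (Fin n)
  setClique : Fin m → Finset (Fin n)
  irrefl : ∀ a, a ∉ F a
  symm : ∀ a b, a ∈ F b → b ∈ F a
  elem_card : ∀ h, (elemClique h).card = x h
  set_card : ∀ k, (setClique k).card = 4 * m ^ 2 * T
  elem_disj : ∀ h h', h ≠ h' → Disjoint (elemClique h) (elemClique h')
  set_disj : ∀ k k', k ≠ k' → Disjoint (setClique k) (setClique k')
  elem_set_disj : ∀ h k, Disjoint (elemClique h) (setClique k)
  cover : (Finset.univ.biUnion elemClique) ∪ (Finset.univ.biUnion setClique)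
    = (Finset.univ : Finset (Fin n))
  elem_clique : ∀ h, ∀ a ∈ elemClique h, ∀ b ∈ elemClique h, a ≠ b → b ∈ F a
  set_clique : ∀ k, ∀ a ∈ setClique k, ∀ b ∈ setClique k, a ≠ b → b ∈ F a
  matching : ∀ (h : Fin (3 * m)) (k : Fin m), ∀ a ∈ elemClique h,
    (setClique k ∩ F a).card = 1
  matching_inj : ∀ (h : Fin (3 * m)) (k : Fin m), ∀ b ∈ setClique k,
    (elemClique h ∩ F b).card ≤ 1
  elem_elem : ∀ h h', h ≠ h' → ∀ a ∈ elemClique h, ∀ b ∈ elemClique h', b ∉ F a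
  set_set : ∀ k k', k ≠ k' → ∀ a ∈ setClique k, ∀ b ∈ setClique k', b ∉ F a

/-- In the reduced FA instance, no coalition of an optimal partition contains two
distinct set-cliques. -/
lemma symm_sum {n : ℕ} (F : Fin n → Finset (Fin n))
    (hs : ∀ a b : Fin n, a ∈ F b → b ∈ F a) (A B : Finset (Fin n)) :
    ∑ a ∈ A, ((B ∩ F a).card) = ∑ b ∈ B, ((A ∩ F b).card) := by
  simp_rw [← Finset.filter_mem_eq_inter, Finset.card_filter]
  rw [Finset.sum_comm]
  exact Finset.sum_congr rfl fun b _ => Finset.sum_congr rfl fun a _ =>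
    if_congr ⟨hs b a, hs a b⟩ rfl rfl

lemma util_union_left {n : ℕ} (t : Finset (Fin n)) (i : Fin n) (A B : Finset (Fin n))
    (hd : Disjoint A B) (hi : i ∈ A) :
    faUtil n t i (A ∪ B) = faUtil n t i A + ((B ∩ t).card : ℚ)
      - (((B.card : ℚ) - ((B ∩ t).card : ℚ)) / (n : ℚ)) := by
  have hiB : i ∉ B := fun h => (Finset.disjoint_left.mp hd hi) h
  have h1 : (A ∪ B) ∩ t = (A ∩ t) ∪ (B ∩ t) := Finset.union_inter_distrib_right _ _ _
  have h2 : (A ∪ B) \ (t ∪ {i}) = (A \ (t ∪ {i})) ∪ (B \ (t ∪ {i})) :=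
    Finset.union_sdiff_distrib _ _ _
  have hd1 : Disjoint (A ∩ t) (B ∩ t) := hd.mono inter_subset_left inter_subset_left
  have hd2 : Disjoint (A \ (t ∪ {i})) (B \ (t ∪ {i})) :=
    hd.mono (sdiff_subset) (sdiff_subset)
  have h3 : B \ (t ∪ {i}) = B \ t := by
    rw [Finset.sdiff_union_distrib]
    refine Finset.inter_eq_left.mpr ?_
    intro b hb
    simp only [Finset.mem_sdiff, Finset.mem_singleton]
    exact ⟨(Finset.mem_sdiff.mp hb).1, fun h => hiB (h ▸ (Finset.mem_sdiff.mp hb).1)⟩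
  have h4 : ((B \ t).card : ℚ) = (B.card : ℚ) - ((B ∩ t).card : ℚ) := by
    have := Finset.card_sdiff_add_card_inter B t
    push_cast [← this]; ring
  unfold faUtil
  rw [h1, h2, Finset.card_union_of_disjoint hd1, Finset.card_union_of_disjoint hd2, h3]
  push_cast
  rw [h4]
  ring

lemma sw_split {n : ℕ} (F : Fin n → Finset (Fin n))
    (hs : ∀ a b : Fin n, a ∈ F b → b ∈ F a)
    (A B : Finset (Fin n)) (hd : Disjoint A B) (hn : 0 < n)
    (hlt : (n + 1) * (∑ b ∈ B, ((A ∩ F b).card)) < A.card * B.card) :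
    ∑ i ∈ A ∪ B, faUtil n (F i) i (A ∪ B)
      < (∑ i ∈ A, faUtil n (F i) i A) + ∑ i ∈ B, faUtil n (F i) i B := by
  have hnq : (0 : ℚ) < (n : ℚ) := by exact_mod_cast hn
  have hA : ∀ i ∈ A, faUtil n (F i) i (A ∪ B)
      = faUtil n (F i) i A + ((B ∩ F i).card : ℚ)
        - (((B.card : ℚ) - ((B ∩ F i).card : ℚ)) / (n : ℚ)) :=
    fun i hi => util_union_left (F i) i A B hd hi
  have hB : ∀ i ∈ B, faUtil n (F i) i (A ∪ B)
      = faUtil n (F i) i B + ((A ∩ F i).card : ℚ)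
        - (((A.card : ℚ) - ((A ∩ F i).card : ℚ)) / (n : ℚ)) := by
    intro i hi
    rw [Finset.union_comm]
    exact util_union_left (F i) i B A hd.symm hi
  have SA : ∑ i ∈ A, faUtil n (F i) i (A ∪ B)
      = (∑ i ∈ A, faUtil n (F i) i A) + (∑ i ∈ A, ((B ∩ F i).card : ℚ))
        - (((A.card : ℚ) * (B.card : ℚ) - ∑ i ∈ A, ((B ∩ F i).card : ℚ)) / (n : ℚ)) := by
    rw [Finset.sum_congr rfl hA, Finset.sum_sub_distrib, Finset.sum_add_distrib,
      ← Finset.sum_div, Finset.sum_sub_distrib, Finset.sum_const, nsmul_eq_mul]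
  have SB : ∑ i ∈ B, faUtil n (F i) i (A ∪ B)
      = (∑ i ∈ B, faUtil n (F i) i B) + (∑ i ∈ B, ((A ∩ F i).card : ℚ))
        - (((B.card : ℚ) * (A.card : ℚ) - ∑ i ∈ B, ((A ∩ F i).card : ℚ)) / (n : ℚ)) := by
    rw [Finset.sum_congr rfl hB, Finset.sum_sub_distrib, Finset.sum_add_distrib,
      ← Finset.sum_div, Finset.sum_sub_distrib, Finset.sum_const, nsmul_eq_mul]
  have hE : (∑ i ∈ A, ((B ∩ F i).card : ℚ)) = ∑ i ∈ B, ((A ∩ F i).card : ℚ) := by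
    exact_mod_cast congrArg (Nat.cast : ℕ → ℚ) (symm_sum F hs A B)
  rw [Finset.sum_union hd, SA, SB, hE]
  set E : ℚ := ∑ i ∈ B, ((A ∩ F i).card : ℚ) with hEdef
  have hltq : ((n : ℚ) + 1) * E < (A.card : ℚ) * (B.card : ℚ) := by
    rw [hEdef]; exact_mod_cast hlt
  have h5 : E < ((A.card : ℚ) * (B.card : ℚ) - E) / (n : ℚ) :=
    (lt_div_iff₀ hnq).mpr (by nlinarith)
  have h6 : ((B.card : ℚ) * (A.card : ℚ) - E) / (n : ℚ)
      = ((A.card : ℚ) * (B.card : ℚ) - E) / (n : ℚ) := by ring_nf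
  rw [h6]
  linarith

theorem stmt8 (m T n : ℕ) (hm : 0 < m) (hT : 0 < T)
    (x : Fin (3 * m) → ℕ)
    (hsum : ∑ h, x h = m * T)
    (hx : ∀ h, T < 4 * x h ∧ 2 * x h < T)
    (hn : n = m * T + 4 * m ^ 3 * T)
    (R : ReducedFA m T n x)
    (π : Finpartition (univ : Finset (Fin n)))
    (hopt : ∀ σ : Finpartition (univ : Finset (Fin n)), faSW n R.F σ ≤ faSW n R.F π) :
    ∀ C ∈ π.parts, ∀ j j' : Fin m, j ≠ j' →
      ¬(R.setClique j ∪ R.setClique j' ⊆ C) := by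
  intro C hC j j' hjj hsub
  have hnpos : 0 < n := by
    subst hn; positivity
  set A := R.setClique j' with hAdef
  set B := C \ A with hBdef
  have hAC : A ⊆ C := (Finset.union_subset_iff.mp hsub).2
  have hjC : R.setClique j ⊆ C := (Finset.union_subset_iff.mp hsub).1
  have hdAB : Disjoint A B := Finset.disjoint_sdiff
  have hUn : A ∪ B = C := Finset.union_sdiff_of_subset hAC
  have hXA : A.card = 4 * m ^ 2 * T := R.set_card j'
  have hjB : R.setClique j ⊆ B :=
    Finset.subset_sdiff.mpr ⟨hjC, R.set_disj j j' hjj⟩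
  have hXB : 4 * m ^ 2 * T ≤ B.card := by
    rw [← R.set_card j]; exact Finset.card_le_card hjB
  have hXpos : 0 < 4 * m ^ 2 * T := by positivity
  have hAne : A.Nonempty := Finset.card_pos.mp (by omega)
  have hBne : B.Nonempty := Finset.card_pos.mp (by omega)
  -- bound on cross edges
  have hE2 : (∑ b ∈ B, ((A ∩ R.F b).card)) ≤ m * T := by
    classical
    have step : ∀ b ∈ B, (A ∩ R.F b).card
        ≤ if b ∈ Finset.univ.biUnion R.elemClique then 1 else 0 := by
      intro b hb
      by_cases hbe : b ∈ Finset.univ.biUnion R.elemClique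
      · simp only [if_pos hbe]
        obtain ⟨h, _, hbh⟩ := Finset.mem_biUnion.mp hbe
        exact le_of_eq (R.matching h j' b hbh)
      · simp only [if_neg hbe]
        have hbu : b ∈ Finset.univ.biUnion R.elemClique ∪ Finset.univ.biUnion R.setClique := by
          rw [R.cover]; exact Finset.mem_univ b
        rcases Finset.mem_union.mp hbu with h1 | h2
        · exact absurd h1 hbe
        · obtain ⟨k, _, hbk⟩ := Finset.mem_biUnion.mp h2
          have hk : k ≠ j' := by
            rintro rfl
            exact (Finset.mem_sdiff.mp hb).2 hbk
          have : A ∩ R.F b = ∅ := by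
            apply Finset.eq_empty_of_forall_notMem
            intro a ha
            obtain ⟨ha1, ha2⟩ := Finset.mem_inter.mp ha
            exact R.set_set k j' hk b hbk a ha1 ha2
          simp [this]
    calc (∑ b ∈ B, ((A ∩ R.F b).card))
        ≤ ∑ b ∈ B, (if b ∈ Finset.univ.biUnion R.elemClique then 1 else 0) :=
          Finset.sum_le_sum step
      _ = (B.filter (· ∈ Finset.univ.biUnion R.elemClique)).card :=
          (Finset.card_filter _ _).symm
      _ ≤ (Finset.univ.biUnion R.elemClique).card :=
          Finset.card_le_card (fun b hb => (Finset.mem_filter.mp hb).2)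
      _ ≤ ∑ h, (R.elemClique h).card := Finset.card_biUnion_le
      _ = m * T := by
          rw [Finset.sum_congr rfl (fun h _ => R.elem_card h)]; exact hsum
  -- key numeric inequality
  have hkey : (n + 1) * (∑ b ∈ B, ((A ∩ R.F b).card)) < A.card * B.card := by
    calc (n + 1) * (∑ b ∈ B, ((A ∩ R.F b).card))
        ≤ (n + 1) * (m * T) := Nat.mul_le_mul_left _ hE2
      _ < (4 * m ^ 2 * T) * (4 * m ^ 2 * T) := by
          subst hn
          have ha : m ^ 2 * T ^ 2 ≤ m ^ 4 * T ^ 2 :=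
            Nat.mul_le_mul_right _ (Nat.pow_le_pow_right hm (by norm_num))
          have hb : m * T ≤ m ^ 4 * T ^ 2 :=
            Nat.mul_le_mul (Nat.le_self_pow (by norm_num) m) (Nat.le_self_pow (by norm_num) T)
          have hc : 0 < m ^ 4 * T ^ 2 := by positivity
          nlinarith [ha, hb, hc]
      _ ≤ A.card * B.card := by rw [hXA]; exact Nat.mul_le_mul_left _ hXB
  have hsplit : ∑ i ∈ C, faUtil n (R.F i) i C
      < (∑ i ∈ A, faUtil n (R.F i) i A) + ∑ i ∈ B, faUtil n (R.F i) i B := by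
    rw [← hUn]
    exact sw_split R.F R.symm A B hdAB hnpos hkey
  -- build the improved partition
  have hABne : A ≠ B := by
    intro h
    exact hBne.ne_empty (by have h' := disjoint_self.mp (h ▸ hdAB); exact h')
  have hAer : A ∉ π.parts.erase C := by
    intro hmem
    obtain ⟨hne, hmem'⟩ := Finset.mem_erase.mp hmem
    have hd := π.disjoint hmem' hC hne
    obtain ⟨a, ha⟩ := hAne
    exact (Finset.disjoint_left.mp hd ha) (hAC ha)
  have hBer : B ∉ π.parts.erase C := by
    intro hmem
    obtain ⟨hne, hmem'⟩ := Finset.mem_erase.mp hmem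
    have hd := π.disjoint hmem' hC hne
    obtain ⟨b, hb⟩ := hBne
    exact (Finset.disjoint_left.mp hd hb) (Finset.sdiff_subset hb)
  -- the new partition
  have hBC : B ⊆ C := Finset.sdiff_subset
  have hsup : (insert A (insert B (π.parts.erase C))).sup id = Finset.univ := by
    rw [Finset.sup_insert, Finset.sup_insert]
    have h1 : (id C : Finset (Fin n)) ⊔ (π.parts.erase C).sup id = π.parts.sup id := by
      rw [← Finset.sup_insert, Finset.insert_erase hC]
    have h2 : π.parts.sup id = Finset.univ := π.sup_parts
    have h3 : (id A : Finset (Fin n)) ⊔ (id B ⊔ (π.parts.erase C).sup id)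
        = (id C : Finset (Fin n)) ⊔ (π.parts.erase C).sup id := by
      simp only [id, Finset.sup_eq_union]
      rw [← Finset.union_assoc, hUn]
    rw [h3, h1, h2]
  have hindep : (insert A (insert B (π.parts.erase C))).SupIndep id := by
    rw [Finset.supIndep_iff_pairwiseDisjoint]
    intro s hs t ht hst
    simp only [Finset.coe_insert, Set.mem_insert_iff, Finset.mem_coe,
      Finset.mem_erase] at hs ht
    have hdisjC : ∀ D, D ≠ C ∧ D ∈ π.parts → Disjoint C D := by
      intro D ⟨h1, h2⟩
      exact (π.disjoint hC h2 (Ne.symm h1))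
    rcases hs with rfl | rfl | ⟨hs1, hs2⟩ <;> rcases ht with h | h | h
    · exact absurd h.symm hst
    · subst h; exact hdAB
    · exact Finset.disjoint_of_subset_left hAC (hdisjC _ h)
    · subst h; exact hdAB.symm
    · exact absurd h.symm hst
    · exact Finset.disjoint_of_subset_left hBC (hdisjC _ h)
    · subst h; exact (Finset.disjoint_of_subset_left hAC (hdisjC _ ⟨hs1, hs2⟩)).symm
    · subst h; exact (Finset.disjoint_of_subset_left hBC (hdisjC _ ⟨hs1, hs2⟩)).symm
    · exact π.disjoint hs2 h.2 hst
  have hnb : ⊥ ∉ insert A (insert B (π.parts.erase C)) := by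
    simp only [Finset.mem_insert, Finset.mem_erase]
    push_neg
    exact ⟨Ne.symm (Finset.nonempty_iff_ne_empty.mp hAne),
      Ne.symm (Finset.nonempty_iff_ne_empty.mp hBne),
      fun _ h => π.bot_notMem h⟩
  let σ : Finpartition (univ : Finset (Fin n)) :=
    ⟨insert A (insert B (π.parts.erase C)), hindep, hsup, hnb⟩
  have hAni : A ∉ insert B (π.parts.erase C) := by
    simp only [Finset.mem_insert]
    push_neg
    exact ⟨hABne, hAer⟩
  have hSWσ : faSW n R.F σ
      = (∑ i ∈ A, faUtil n (R.F i) i A) + ((∑ i ∈ B, faUtil n (R.F i) i B)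
        + ∑ D ∈ π.parts.erase C, ∑ i ∈ D, faUtil n (R.F i) i D) := by
    show (∑ D ∈ insert A (insert B (π.parts.erase C)), ∑ i ∈ D, faUtil n (R.F i) i D) = _
    rw [Finset.sum_insert hAni, Finset.sum_insert hBer]
  have hSWπ : faSW n R.F π
      = (∑ i ∈ C, faUtil n (R.F i) i C)
        + ∑ D ∈ π.parts.erase C, ∑ i ∈ D, faUtil n (R.F i) i D := by
    unfold faSW
    rw [← Finset.sum_erase_add π.parts _ hC, add_comm]
  have := hopt σ
  rw [hSWσ, hSWπ] at this
  linarith
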